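/- Let σ ≥ 0 and let ξ1, ξ2, ξ3, ξ4 be real numbers with ξ1 + ξ2 + ξ3 + ξ4 = 0. Then Σ_{k=0}^∞ (σ^{k+4}/(k+4)!) Θ2(k) ≤ 15 σ⁴ e^{σ(|ξ1|+|ξ2|+|ξ3|+|ξ4|)}. -/

import Mathlib

open Finset

/-- The quantity `Θ1(k)` of (3.65), with `ξ 0, ξ 1, ξ 2, ξ 3` playing the roles of
`ξ1, ξ2, ξ3, ξ4`.  The second sum ranges over the 24 ordered triples of pairwise
distinct indices `(p1, p2, p3)` in `{1, 2, 3, 4}`. -/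
noncomputable def Theta1 (ξ : Fin 4 → ℝ) (k : ℕ) : ℝ :=
  (∑ p ∈ antidiagonal k,
      ( |ξ 0| ^ p.1 * |ξ 0 + ξ 3| ^ p.2 + |ξ 1| ^ p.1 * |ξ 1 + ξ 3| ^ p.2
      + |ξ 2| ^ p.1 * |ξ 2 + ξ 3| ^ p.2 + |ξ 3| ^ p.1 * |ξ 2 + ξ 3| ^ p.2 ))
  + ∑ p ∈ antidiagonal k,
      ∑ t ∈ (Finset.univ : Finset (Fin 4 × Fin 4 × Fin 4)).filter
          (fun t => t.1 ≠ t.2.1 ∧ t.1 ≠ t.2.2 ∧ t.2.1 ≠ t.2.2),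
        |ξ t.1| ^ p.1 *
          ∑ q ∈ antidiagonal p.2, |ξ t.2.1| ^ q.1 * |ξ t.2.1 + ξ t.2.2| ^ q.2

/-- The quantity `Θ2(k)` of (3.66), with `ξ 0, ξ 1, ξ 2, ξ 3` playing the roles of
`ξ1, ξ2, ξ3, ξ4`. -/
noncomputable def Theta2 (ξ : Fin 4 → ℝ) (k : ℕ) : ℝ :=
  (∑ p ∈ antidiagonal k, (|ξ 0| ^ p.1 * |ξ 3| ^ p.2 + |ξ 1| ^ p.1 * |ξ 2| ^ p.2))
  + ∑ p ∈ antidiagonal k,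
      |ξ 2| ^ p.1 * ∑ q ∈ antidiagonal p.2, |ξ 0| ^ q.1 * |ξ 3| ^ q.2
  + ∑ p ∈ antidiagonal k,
      |ξ 3| ^ p.2 * ∑ q ∈ antidiagonal p.1, |ξ 1| ^ q.1 * |ξ 2| ^ q.2
  + ∑ p ∈ antidiagonal k,
      |ξ 3| ^ p.1 * ∑ q ∈ antidiagonal p.2, |ξ 3| ^ q.1 * |ξ 0| ^ q.2
  + ∑ p ∈ antidiagonal k,
      (∑ q ∈ antidiagonal p.1, |ξ 0| ^ q.1 * |ξ 3| ^ q.2) *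
      (∑ q ∈ antidiagonal p.2, |ξ 1| ^ q.1 * |ξ 3| ^ q.2)
  + ∑ p ∈ antidiagonal k,
      |ξ 3| ^ p.1 *
        ∑ q ∈ antidiagonal p.2,
          ( |ξ 0| ^ q.2 * ∑ r ∈ antidiagonal q.1, |ξ 2| ^ r.1 * |ξ 1| ^ r.2
          + |ξ 1| ^ q.1 * ∑ r ∈ antidiagonal q.2, |ξ 3| ^ r.1 * |ξ 0| ^ r.2 )

/-- Estimate (3.74): for `σ ≥ 0` and `ξ1 + ξ2 + ξ3 + ξ4 = 0`,
`Σ_{k=0}^∞ (σ^{k+4}/(k+4)!) Θ2(k) ≤ 15 σ⁴ e^{σ(|ξ1|+|ξ2|+|ξ3|+|ξ4|)}`. -/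

private lemma adsum_le {x y S : ℝ} (hx : 0 ≤ x) (hy : 0 ≤ y) (hxS : x ≤ S) (hyS : y ≤ S)
    (m : ℕ) : ∑ q ∈ antidiagonal m, x ^ q.1 * y ^ q.2 ≤ ((m : ℝ) + 1) * S ^ m := by
  have hS : 0 ≤ S := hx.trans hxS
  calc ∑ q ∈ antidiagonal m, x ^ q.1 * y ^ q.2
      ≤ ∑ _q ∈ antidiagonal m, S ^ m := by
        refine sum_le_sum fun q hq => ?_
        rw [HasAntidiagonal.mem_antidiagonal] at hq
        calc x ^ q.1 * y ^ q.2 ≤ S ^ q.1 * S ^ q.2 :=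
              mul_le_mul (pow_le_pow_left₀ hx hxS _) (pow_le_pow_left₀ hy hyS _)
                (by positivity) (by positivity)
          _ = S ^ m := by rw [← pow_add, hq]
    _ = ((m : ℝ) + 1) * S ^ m := by
        rw [sum_const, Nat.card_antidiagonal, nsmul_eq_mul]; push_cast; ring

private lemma hfact (k : ℕ) : ((k+4).factorial : ℝ)
    = ((k:ℝ)+1)*((k:ℝ)+2)*((k:ℝ)+3)*((k:ℝ)+4)*(k.factorial : ℝ) := by
  have h1 : (k+4).factorial = (k+4)*((k+3)*((k+2)*((k+1)*k.factorial))) := by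
    rw [show k+4 = (k+3)+1 from rfl, Nat.factorial_succ,
        show k+3 = (k+2)+1 from rfl, Nat.factorial_succ,
        show k+2 = (k+1)+1 from rfl, Nat.factorial_succ, Nat.factorial_succ]
  rw [h1]; push_cast; ring

private lemma theta2_le (ξ : Fin 4 → ℝ) (k : ℕ) :
    Theta2 ξ k ≤ 8 * ((k:ℝ)+1)^3 * (|ξ 0| + |ξ 1| + |ξ 2| + |ξ 3|) ^ k := by
  set S : ℝ := |ξ 0| + |ξ 1| + |ξ 2| + |ξ 3| with hSdef
  have hS : 0 ≤ S := by positivity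
  have hA : ∀ i : Fin 4, 0 ≤ |ξ i| := fun i => abs_nonneg _
  have hAS : ∀ i : Fin 4, |ξ i| ≤ S := by
    have n0 := abs_nonneg (ξ 0); have n1 := abs_nonneg (ξ 1)
    have n2 := abs_nonneg (ξ 2); have n3 := abs_nonneg (ξ 3)
    have b0 : |ξ 0| ≤ S := by rw [hSdef]; linarith
    have b1 : |ξ 1| ≤ S := by rw [hSdef]; linarith
    have b2 : |ξ 2| ≤ S := by rw [hSdef]; linarith
    have b3 : |ξ 3| ≤ S := by rw [hSdef]; linarith
    intro i; fin_cases i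
    exacts [b0, b1, b2, b3]
  have hk1 : (0:ℝ) ≤ (k:ℝ) + 1 := by positivity
  -- generic bound for p ∈ antidiagonal k pieces
  have hcard : ((antidiagonal k).card : ℝ) = (k:ℝ) + 1 := by
    rw [Nat.card_antidiagonal]; push_cast; ring
  -- monomial bound
  have hmono : ∀ (i j : Fin 4) (p : ℕ × ℕ), p ∈ antidiagonal k →
      |ξ i| ^ p.1 * |ξ j| ^ p.2 ≤ S ^ k := by
    intro i j p hp
    rw [HasAntidiagonal.mem_antidiagonal] at hp
    calc |ξ i| ^ p.1 * |ξ j| ^ p.2 ≤ S ^ p.1 * S ^ p.2 :=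
          mul_le_mul (pow_le_pow_left₀ (hA i) (hAS i) _) (pow_le_pow_left₀ (hA j) (hAS j) _)
            (by positivity) (by positivity)
      _ = S ^ k := by rw [← pow_add, hp]
  -- core bound
  have hcore : ∀ (i j l : Fin 4) (a b : ℕ),
      |ξ i| ^ a * ∑ q ∈ antidiagonal b, |ξ j| ^ q.1 * |ξ l| ^ q.2
        ≤ ((b:ℝ) + 1) * S ^ (a + b) := by
    intro i j l a b
    have h1 := adsum_le (hA j) (hA l) (hAS j) (hAS l) b
    calc |ξ i| ^ a * ∑ q ∈ antidiagonal b, |ξ j| ^ q.1 * |ξ l| ^ q.2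
        ≤ S ^ a * (((b:ℝ) + 1) * S ^ b) := by
          refine mul_le_mul (pow_le_pow_left₀ (hA i) (hAS i) _) h1 ?_ (by positivity)
          exact sum_nonneg fun q _ => by positivity
      _ = ((b:ℝ) + 1) * S ^ (a + b) := by rw [pow_add]; ring
  have hcore' : ∀ (i j l : Fin 4) (a b : ℕ), a + b = k →
      |ξ i| ^ a * ∑ q ∈ antidiagonal b, |ξ j| ^ q.1 * |ξ l| ^ q.2
        ≤ ((k:ℝ) + 1) * S ^ k := by
    intro i j l a b hab
    refine (hcore i j l a b).trans ?_
    rw [hab]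
    refine mul_le_mul_of_nonneg_right ?_ (by positivity)
    have : b ≤ k := hab ▸ Nat.le_add_left b a
    exact_mod_cast Nat.succ_le_succ this
  have hsumk : ∀ (f : ℕ × ℕ → ℝ) (b : ℝ), (∀ p ∈ antidiagonal k, f p ≤ b) →
      ∑ p ∈ antidiagonal k, f p ≤ ((k:ℝ) + 1) * b := by
    intro f b hb
    calc ∑ p ∈ antidiagonal k, f p ≤ (antidiagonal k).card • b := sum_le_card_nsmul _ _ _ hb
      _ = ((k:ℝ) + 1) * b := by rw [nsmul_eq_mul, hcard]
  -- group 1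
  have h1 : ∑ p ∈ antidiagonal k, (|ξ 0| ^ p.1 * |ξ 3| ^ p.2 + |ξ 1| ^ p.1 * |ξ 2| ^ p.2)
      ≤ ((k:ℝ) + 1) * (2 * S ^ k) := by
    refine hsumk _ _ fun p hp => ?_
    have := add_le_add (hmono 0 3 p hp) (hmono 1 2 p hp)
    linarith
  -- groups 2,3,4
  have h2 : ∑ p ∈ antidiagonal k,
      |ξ 2| ^ p.1 * ∑ q ∈ antidiagonal p.2, |ξ 0| ^ q.1 * |ξ 3| ^ q.2
      ≤ ((k:ℝ) + 1) * (((k:ℝ) + 1) * S ^ k) := by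
    refine hsumk _ _ fun p hp => ?_
    exact hcore' 2 0 3 p.1 p.2 (mem_antidiagonal.mp hp)
  have h3 : ∑ p ∈ antidiagonal k,
      |ξ 3| ^ p.2 * ∑ q ∈ antidiagonal p.1, |ξ 1| ^ q.1 * |ξ 2| ^ q.2
      ≤ ((k:ℝ) + 1) * (((k:ℝ) + 1) * S ^ k) := by
    refine hsumk _ _ fun p hp => ?_
    refine hcore' 3 1 2 p.2 p.1 ?_
    rw [Nat.add_comm]; exact mem_antidiagonal.mp hp
  have h4 : ∑ p ∈ antidiagonal k,
      |ξ 3| ^ p.1 * ∑ q ∈ antidiagonal p.2, |ξ 3| ^ q.1 * |ξ 0| ^ q.2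
      ≤ ((k:ℝ) + 1) * (((k:ℝ) + 1) * S ^ k) := by
    refine hsumk _ _ fun p hp => ?_
    exact hcore' 3 3 0 p.1 p.2 (mem_antidiagonal.mp hp)
  -- group 5
  have h5 : ∑ p ∈ antidiagonal k,
      (∑ q ∈ antidiagonal p.1, |ξ 0| ^ q.1 * |ξ 3| ^ q.2) *
      (∑ q ∈ antidiagonal p.2, |ξ 1| ^ q.1 * |ξ 3| ^ q.2)
      ≤ ((k:ℝ) + 1) * (((k:ℝ) + 1) ^ 2 * S ^ k) := by
    refine hsumk _ _ fun p hp => ?_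
    have hp' := mem_antidiagonal.mp hp
    have e1 := adsum_le (hA 0) (hA 3) (hAS 0) (hAS 3) p.1
    have e2 := adsum_le (hA 1) (hA 3) (hAS 1) (hAS 3) p.2
    have n1 : (0:ℝ) ≤ ∑ q ∈ antidiagonal p.1, |ξ 0| ^ q.1 * |ξ 3| ^ q.2 :=
      sum_nonneg fun q _ => by positivity
    have hp1 : ((p.1:ℝ) + 1) ≤ (k:ℝ) + 1 := by
      have : p.1 ≤ k := hp' ▸ Nat.le_add_right p.1 p.2
      exact_mod_cast Nat.succ_le_succ this
    have hp2 : ((p.2:ℝ) + 1) ≤ (k:ℝ) + 1 := by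
      have : p.2 ≤ k := hp' ▸ Nat.le_add_left p.2 p.1
      exact_mod_cast Nat.succ_le_succ this
    calc (∑ q ∈ antidiagonal p.1, |ξ 0| ^ q.1 * |ξ 3| ^ q.2) *
        (∑ q ∈ antidiagonal p.2, |ξ 1| ^ q.1 * |ξ 3| ^ q.2)
        ≤ (((p.1:ℝ) + 1) * S ^ p.1) * (((p.2:ℝ) + 1) * S ^ p.2) := by
          refine mul_le_mul e1 e2 (sum_nonneg fun q _ => by positivity) ?_
          positivity
      _ = (((p.1:ℝ) + 1) * ((p.2:ℝ) + 1)) * S ^ k := by rw [← hp', pow_add]; ring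
      _ ≤ (((k:ℝ) + 1) * ((k:ℝ) + 1)) * S ^ k := by
          refine mul_le_mul_of_nonneg_right ?_ (by positivity)
          exact mul_le_mul hp1 hp2 (by positivity) (by positivity)
      _ = ((k:ℝ) + 1) ^ 2 * S ^ k := by ring
  -- group 6
  have h6 : ∑ p ∈ antidiagonal k,
      |ξ 3| ^ p.1 *
        ∑ q ∈ antidiagonal p.2,
          ( |ξ 0| ^ q.2 * ∑ r ∈ antidiagonal q.1, |ξ 2| ^ r.1 * |ξ 1| ^ r.2
          + |ξ 1| ^ q.1 * ∑ r ∈ antidiagonal q.2, |ξ 3| ^ r.1 * |ξ 0| ^ r.2 )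
      ≤ ((k:ℝ) + 1) * (2 * ((k:ℝ) + 1) ^ 2 * S ^ k) := by
    refine hsumk _ _ fun p hp => ?_
    have hp' := mem_antidiagonal.mp hp
    have hp2k : p.2 ≤ k := hp' ▸ Nat.le_add_left p.2 p.1
    have hinner : ∑ q ∈ antidiagonal p.2,
          ( |ξ 0| ^ q.2 * ∑ r ∈ antidiagonal q.1, |ξ 2| ^ r.1 * |ξ 1| ^ r.2
          + |ξ 1| ^ q.1 * ∑ r ∈ antidiagonal q.2, |ξ 3| ^ r.1 * |ξ 0| ^ r.2 )
        ≤ ((k:ℝ) + 1) * (2 * ((k:ℝ) + 1) * S ^ p.2) := by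
      calc _ ≤ (antidiagonal p.2).card • (2 * ((k:ℝ) + 1) * S ^ p.2) := by
              refine sum_le_card_nsmul _ _ _ fun q hq => ?_
              have hq' := mem_antidiagonal.mp hq
              have hq1 : q.1 ≤ k := le_trans (hq' ▸ Nat.le_add_right q.1 q.2) hp2k
              have hq2 : q.2 ≤ k := le_trans (hq' ▸ Nat.le_add_left q.2 q.1) hp2k
              have eA := hcore 0 2 1 q.2 q.1
              have eB := hcore 1 3 0 q.1 q.2
              have hA2 : ((q.1:ℝ) + 1) * S ^ (q.2 + q.1) ≤ ((k:ℝ) + 1) * S ^ p.2 := by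
                rw [Nat.add_comm, hq']
                refine mul_le_mul_of_nonneg_right ?_ (by positivity)
                exact_mod_cast Nat.succ_le_succ hq1
              have hB2 : ((q.2:ℝ) + 1) * S ^ (q.1 + q.2) ≤ ((k:ℝ) + 1) * S ^ p.2 := by
                rw [hq']
                refine mul_le_mul_of_nonneg_right ?_ (by positivity)
                exact_mod_cast Nat.succ_le_succ hq2
              have := add_le_add (eA.trans hA2) (eB.trans hB2)
              linarith
        _ ≤ ((k:ℝ) + 1) * (2 * ((k:ℝ) + 1) * S ^ p.2) := by
            rw [nsmul_eq_mul, Nat.card_antidiagonal]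
            refine mul_le_mul_of_nonneg_right ?_ (by positivity)
            push_cast
            exact_mod_cast (by exact_mod_cast Nat.succ_le_succ hp2k : ((p.2:ℝ) + 1) ≤ (k:ℝ) + 1)
    calc |ξ 3| ^ p.1 * ∑ q ∈ antidiagonal p.2,
          ( |ξ 0| ^ q.2 * ∑ r ∈ antidiagonal q.1, |ξ 2| ^ r.1 * |ξ 1| ^ r.2
          + |ξ 1| ^ q.1 * ∑ r ∈ antidiagonal q.2, |ξ 3| ^ r.1 * |ξ 0| ^ r.2 )
        ≤ S ^ p.1 * (((k:ℝ) + 1) * (2 * ((k:ℝ) + 1) * S ^ p.2)) := by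
          refine mul_le_mul (pow_le_pow_left₀ (hA 3) (hAS 3) _) hinner ?_ (by positivity)
          exact sum_nonneg fun q _ => add_nonneg (by positivity) (by positivity)
      _ = 2 * ((k:ℝ) + 1) ^ 2 * (S ^ p.1 * S ^ p.2) := by ring
      _ = 2 * ((k:ℝ) + 1) ^ 2 * S ^ k := by rw [← pow_add, hp']
  have total := add_le_add (add_le_add (add_le_add (add_le_add (add_le_add h1 h2) h3) h4) h5) h6
  rw [Theta2]
  refine total.trans ?_
  have hX : (0:ℝ) ≤ S ^ k := by positivity
  have hn : (0:ℝ) ≤ (k:ℝ) := Nat.cast_nonneg k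
  nlinarith [mul_nonneg hX hn, mul_nonneg (mul_nonneg hX hn) hn,
    mul_nonneg (mul_nonneg (mul_nonneg hX hn) hn) hn]

private lemma theta2_nonneg (ξ : Fin 4 → ℝ) (k : ℕ) : 0 ≤ Theta2 ξ k := by
  rw [Theta2]
  have : ∀ (s : Finset (ℕ × ℕ)) (f : ℕ × ℕ → ℝ), (∀ p ∈ s, 0 ≤ f p) → 0 ≤ ∑ p ∈ s, f p :=
    fun s f h => sum_nonneg h
  positivity

theorem Theta2_series_bound (σ : ℝ) (hσ : 0 ≤ σ) (ξ : Fin 4 → ℝ)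
    (h : ξ 0 + ξ 1 + ξ 2 + ξ 3 = 0) :
    ∑' k : ℕ, σ ^ (k + 4) / (Nat.factorial (k + 4) : ℝ) * Theta2 ξ k
      ≤ 15 * σ ^ 4 * Real.exp (σ * (|ξ 0| + |ξ 1| + |ξ 2| + |ξ 3|)) := by
  set S : ℝ := |ξ 0| + |ξ 1| + |ξ 2| + |ξ 3| with hSdef
  have hS : 0 ≤ S := by positivity
  have hterm : ∀ k : ℕ, σ ^ (k + 4) / (Nat.factorial (k + 4) : ℝ) * Theta2 ξ k
      ≤ 15 * σ ^ 4 * ((σ * S) ^ k / (Nat.factorial k : ℝ)) := by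
    intro k
    have hb := theta2_le ξ k
    have hc : (0:ℝ) ≤ σ ^ (k + 4) / (Nat.factorial (k + 4) : ℝ) := by positivity
    have hone : (1:ℝ) ≤ (Nat.factorial k : ℝ) := by
      exact_mod_cast Nat.one_le_iff_ne_zero.mpr (Nat.factorial_ne_zero k)
    have hn : (0:ℝ) ≤ (k:ℝ) := Nat.cast_nonneg k
    have key : 8 * ((k:ℝ) + 1) ^ 3 / ((k + 4).factorial : ℝ)
        ≤ 15 / (Nat.factorial k : ℝ) := by
      rw [hfact k, div_le_div_iff₀ (by positivity) (by positivity)]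
      have hF : (0:ℝ) ≤ (Nat.factorial k : ℝ) := by positivity
      nlinarith [mul_nonneg hF hn, mul_nonneg (mul_nonneg hF hn) hn,
        mul_nonneg (mul_nonneg (mul_nonneg hF hn) hn) hn,
        mul_nonneg (mul_nonneg (mul_nonneg (mul_nonneg hF hn) hn) hn) hn]
    calc σ ^ (k + 4) / (Nat.factorial (k + 4) : ℝ) * Theta2 ξ k
        ≤ σ ^ (k + 4) / (Nat.factorial (k + 4) : ℝ) * (8 * ((k:ℝ) + 1) ^ 3 * S ^ k) :=
          mul_le_mul_of_nonneg_left hb hc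
      _ = (8 * ((k:ℝ) + 1) ^ 3 / ((k + 4).factorial : ℝ)) * (σ ^ 4 * σ ^ k * S ^ k) := by
          rw [pow_add]; ring
      _ ≤ (15 / (Nat.factorial k : ℝ)) * (σ ^ 4 * σ ^ k * S ^ k) :=
          mul_le_mul_of_nonneg_right key (by positivity)
      _ = 15 * σ ^ 4 * ((σ * S) ^ k / (Nat.factorial k : ℝ)) := by
          rw [mul_pow]; ring
  have hsumR : Summable (fun k : ℕ => 15 * σ ^ 4 * ((σ * S) ^ k / (Nat.factorial k : ℝ))) :=
    (Real.summable_pow_div_factorial (σ * S)).mul_left _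
  have hsumL : Summable (fun k : ℕ =>
      σ ^ (k + 4) / (Nat.factorial (k + 4) : ℝ) * Theta2 ξ k) := by
    refine Summable.of_nonneg_of_le (fun k => ?_) hterm hsumR
    exact mul_nonneg (by positivity) (theta2_nonneg ξ k)
  calc ∑' k : ℕ, σ ^ (k + 4) / (Nat.factorial (k + 4) : ℝ) * Theta2 ξ k
      ≤ ∑' k : ℕ, 15 * σ ^ 4 * ((σ * S) ^ k / (Nat.factorial k : ℝ)) :=
        Summable.tsum_le_tsum hterm hsumL hsumR
    _ = 15 * σ ^ 4 * ∑' k : ℕ, (σ * S) ^ k / (Nat.factorial k : ℝ) := tsum_mul_left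
    _ = 15 * σ ^ 4 * Real.exp (σ * S) := by
        rw [Real.exp_eq_exp_ℝ, NormedSpace.exp_eq_tsum_div]
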